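/- Explicit pure-quantum probability for two states: let ζ ≥ 0, let G be a 2×2 Hermitian matrix with eigenvalues λ₁ > λ₂ and a unitary matrix B = (b_{kl}) of eigenvectors so that G = B·diag(λ₁, λ₂)·B*, and let U_n = exp(i·n^{−ζ/2}·G). Then for every n ≥ 1, the coherent (p = 0) n-step probability satisfies |⟨1| U_n U_{n−1} ⋯ U_1 |1⟩|² = 1 − 2|b_{11}|²|b_{12}|²·[1 − cos((λ₁ − λ₂)·Σ_{k=1}^{n} k^{−ζ/2})], and |⟨1| U_n ⋯ U_1 |2⟩|² = 2|b_{11}|²|b_{12}|²·[1 − cos((λ₁ − λ₂)·Σ_{k=1}^{n} k^{−ζ/2})]. -/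

import Mathlib

open Matrix BigOperators

/-- `Uprod U s t = U_t · U_{t-1} ⋯ U_{s+1}` (the identity if `t ≤ s`). -/
noncomputable def Uprod (m : ℕ) (U : ℕ → Matrix (Fin m) (Fin m) ℂ) (s : ℕ) :
    ℕ → Matrix (Fin m) (Fin m) ℂ
  | 0 => 1
  | (t + 1) => if t + 1 ≤ s then 1 else U (t + 1) * Uprod m U s t

lemma exp_conj_diag_aux (B : Matrix (Fin 2) (Fin 2) ℂ)
    (h1 : B * Bᴴ = 1) (h2 : Bᴴ * B = 1) (v : Fin 2 → ℂ) (c : ℂ) :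
    NormedSpace.exp (c • (B * Matrix.diagonal v * Bᴴ)) =
      B * Matrix.diagonal (fun k => Complex.exp (c * v k)) * Bᴴ := by
  set u : (Matrix (Fin 2) (Fin 2) ℂ)ˣ := ⟨B, Bᴴ, h1, h2⟩ with hu
  have hcoe : (u : Matrix (Fin 2) (Fin 2) ℂ) = B := rfl
  have hcoe' : ((u⁻¹ : (Matrix (Fin 2) (Fin 2) ℂ)ˣ) : Matrix (Fin 2) (Fin 2) ℂ) = Bᴴ := rfl
  have key : c • (B * Matrix.diagonal v * Bᴴ) =
      (u : Matrix (Fin 2) (Fin 2) ℂ) * Matrix.diagonal (c • v) *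
        ((u⁻¹ : (Matrix (Fin 2) (Fin 2) ℂ)ˣ) : Matrix (Fin 2) (Fin 2) ℂ) := by
    rw [hcoe, hcoe', Matrix.diagonal_smul, Matrix.mul_smul, Matrix.smul_mul]
  rw [key, Matrix.exp_units_conj, Matrix.exp_diagonal, hcoe, hcoe']
  have hv : NormedSpace.exp (c • v) = fun k => Complex.exp (c * v k) := by
    funext k
    rw [Pi.exp_def]
    simp [← Complex.exp_eq_exp_ℂ, smul_eq_mul]
  rw [hv]
/-- explicit pure-quantum probability for two states: if `G = B·diag(λ₁,λ₂)·B*`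
is a 2×2 Hermitian matrix with eigenvalues `λ₁ > λ₂` and unitary eigenvector matrix `B`, and
`U_n = exp(i n^{−ζ/2} G)`, then the coherent `n`-step probabilities are
`|⟨1|U_n⋯U_1|1⟩|² = 1 − 2|b₁₁|²|b₁₂|²(1 − cos((λ₁−λ₂)·Σ_{k=1}^n k^{−ζ/2}))` and
`|⟨1|U_n⋯U_1|2⟩|² = 2|b₁₁|²|b₁₂|²(1 − cos((λ₁−λ₂)·Σ_{k=1}^n k^{−ζ/2}))`. -/
theorem stmt17 (ζ : ℝ) (hζ : 0 ≤ ζ)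
    (G : Matrix (Fin 2) (Fin 2) ℂ) (hG : G.IsHermitian)
    (lam₁ lam₂ : ℝ) (hlam : lam₂ < lam₁)
    (B : Matrix (Fin 2) (Fin 2) ℂ) (hB : B ∈ Matrix.unitaryGroup (Fin 2) ℂ)
    (hGdiag : G = B * Matrix.diagonal ![(lam₁ : ℂ), (lam₂ : ℂ)] * Bᴴ)
    (U : ℕ → Matrix (Fin 2) (Fin 2) ℂ)
    (hU : ∀ n : ℕ, U n =
      NormedSpace.exp ((Complex.I * (((n : ℝ) ^ (-(ζ / 2)) : ℝ) : ℂ)) • G))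
    (n : ℕ) (hn : 1 ≤ n) :
    ‖(Uprod 2 U 0 n) 0 0‖ ^ 2 =
      1 - 2 * ‖B 0 0‖ ^ 2 * ‖B 0 1‖ ^ 2 *
        (1 - Real.cos ((lam₁ - lam₂) *
          ∑ k ∈ Finset.Icc 1 n, ((k : ℝ) ^ (-(ζ / 2))))) ∧
    ‖(Uprod 2 U 0 n) 0 1‖ ^ 2 =
      2 * ‖B 0 0‖ ^ 2 * ‖B 0 1‖ ^ 2 *
        (1 - Real.cos ((lam₁ - lam₂) *
          ∑ k ∈ Finset.Icc 1 n, ((k : ℝ) ^ (-(ζ / 2))))) := by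
  have h1 : B * Bᴴ = 1 := by
    have := (Matrix.mem_unitaryGroup_iff).mp hB
    simpa [Matrix.star_eq_conjTranspose] using this
  have h2 : Bᴴ * B = 1 := by
    have := (Matrix.mem_unitaryGroup_iff').mp hB
    simpa [Matrix.star_eq_conjTranspose] using this
  set S : ℕ → ℝ := fun m => ∑ k ∈ Finset.Icc 1 m, ((k : ℝ) ^ (-(ζ / 2))) with hS
  have hprod : ∀ m : ℕ, Uprod 2 U 0 m =
      B * Matrix.diagonal
        (fun k => Complex.exp (Complex.I * (S m : ℂ) * (![(lam₁ : ℂ), (lam₂ : ℂ)] k))) * Bᴴ := by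
    intro m
    induction m with
    | zero =>
        have hS0 : S 0 = 0 := by simp [hS]
        simp only [Uprod, hS0]
        norm_num
        exact h1.symm
    | succ m ih =>
        have hstep : Uprod 2 U 0 (m + 1) = U (m + 1) * Uprod 2 U 0 m := by
          simp [Uprod]
        rw [hstep, ih, hU (m + 1), hGdiag,
          exp_conj_diag_aux B h1 h2 _ _]
        have hassoc : ∀ D₁ D₂ : Matrix (Fin 2) (Fin 2) ℂ,
            (B * D₁ * Bᴴ) * (B * D₂ * Bᴴ) = B * (D₁ * D₂) * Bᴴ := by
          intro D₁ D₂
          calc (B * D₁ * Bᴴ) * (B * D₂ * Bᴴ)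
              = B * D₁ * (Bᴴ * B) * D₂ * Bᴴ := by noncomm_ring
            _ = B * (D₁ * D₂) * Bᴴ := by rw [h2]; noncomm_ring
        rw [hassoc, Matrix.diagonal_mul_diagonal]
        refine congrArg (fun D => B * D * Bᴴ) (congrArg Matrix.diagonal ?_)
        funext k
        have hSsucc : S (m + 1) = S m + ((m + 1 : ℕ) : ℝ) ^ (-(ζ / 2)) := by
          rw [hS]
          simpa using Finset.sum_Icc_succ_top (by omega : 1 ≤ m + 1)
            (fun k : ℕ => ((k : ℝ) ^ (-(ζ / 2))))
        rw [← Complex.exp_add, hSsucc]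
        congr 1
        push_cast
        ring
  have hrow : ‖B 0 0‖ ^ 2 + ‖B 0 1‖ ^ 2 = 1 := by
    have h := congrFun (congrFun h1 0) 0
    simp only [Matrix.mul_apply, Fin.sum_univ_two, Matrix.conjTranspose_apply,
      Matrix.one_apply_eq, Complex.star_def, Complex.mul_conj] at h
    have h' := congrArg Complex.re h
    simp only [Complex.add_re, Complex.ofReal_re, Complex.one_re] at h'
    simpa [Complex.sq_norm] using h'
  have hcol : ‖B 0 0‖ ^ 2 + ‖B 1 0‖ ^ 2 = 1 := by
    have h := congrFun (congrFun h2 0) 0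
    simp only [Matrix.mul_apply, Fin.sum_univ_two, Matrix.conjTranspose_apply,
      Matrix.one_apply_eq, Complex.star_def, Complex.mul_conj'] at h
    have h' := congrArg Complex.re h
    simp only [Complex.add_re, Complex.ofReal_re, Complex.one_re] at h'
    simpa [Complex.sq_norm, Complex.normSq_apply] using h'
  have horth : B 0 0 * (starRingEnd ℂ) (B 1 0) + B 0 1 * (starRingEnd ℂ) (B 1 1) = 0 := by
    have h := congrFun (congrFun h1 0) 1
    simpa [Matrix.mul_apply, Fin.sum_univ_two, Matrix.conjTranspose_apply,
      Matrix.one_apply, Complex.star_def] using h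
  set θ₁ : ℝ := lam₁ * S n with hθ₁
  set θ₂ : ℝ := lam₂ * S n with hθ₂
  have hentry : ∀ j : Fin 2, (Uprod 2 U 0 n) 0 j =
      B 0 0 * Complex.exp ((θ₁ : ℂ) * Complex.I) * (starRingEnd ℂ) (B j 0) +
      B 0 1 * Complex.exp ((θ₂ : ℂ) * Complex.I) * (starRingEnd ℂ) (B j 1) := by
    intro j
    rw [hprod n]
    simp [Matrix.mul_apply, Fin.sum_univ_two, Matrix.diagonal_apply,
      Matrix.conjTranspose_apply, Complex.star_def]
    have e1 : Complex.I * ((S n : ℝ) : ℂ) * (lam₁ : ℂ) = (θ₁ : ℂ) * Complex.I := by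
      rw [hθ₁]; push_cast; ring
    have e2 : Complex.I * ((S n : ℝ) : ℂ) * (lam₂ : ℂ) = (θ₂ : ℂ) * Complex.I := by
      rw [hθ₂]; push_cast; ring
    rw [e1, e2]
  have hθd : (lam₁ - lam₂) * S n = θ₁ - θ₂ := by rw [hθ₁, hθ₂]; ring
  have hpy1 : Real.sin θ₁ ^ 2 + Real.cos θ₁ ^ 2 = 1 := Real.sin_sq_add_cos_sq θ₁
  have hpy2 : Real.sin θ₂ ^ 2 + Real.cos θ₂ ^ 2 = 1 := Real.sin_sq_add_cos_sq θ₂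
  constructor
  · -- (0,0) entry
    have ha : B 0 0 * (starRingEnd ℂ) (B 0 0) = ((‖B 0 0‖ ^ 2 : ℝ) : ℂ) := by
      rw [Complex.mul_conj]
      norm_cast
      rw [Complex.normSq_eq_norm_sq]
    have hb : B 0 1 * (starRingEnd ℂ) (B 0 1) = ((‖B 0 1‖ ^ 2 : ℝ) : ℂ) := by
      rw [Complex.mul_conj]
      norm_cast
      rw [Complex.normSq_eq_norm_sq]
    have hM00 : (Uprod 2 U 0 n) 0 0 =
        ((‖B 0 0‖ ^ 2 : ℝ) : ℂ) * Complex.exp ((θ₁ : ℂ) * Complex.I) +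
        ((‖B 0 1‖ ^ 2 : ℝ) : ℂ) * Complex.exp ((θ₂ : ℂ) * Complex.I) := by
      rw [hentry 0]
      linear_combination Complex.exp ((θ₁ : ℂ) * Complex.I) * ha +
        Complex.exp ((θ₂ : ℂ) * Complex.I) * hb
    have habs : ‖(Uprod 2 U 0 n) 0 0‖ ^ 2 =
        (‖B 0 0‖ ^ 2 * Real.cos θ₁ + ‖B 0 1‖ ^ 2 * Real.cos θ₂) ^ 2 +
        (‖B 0 0‖ ^ 2 * Real.sin θ₁ + ‖B 0 1‖ ^ 2 * Real.sin θ₂) ^ 2 := by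
      rw [hM00, Complex.sq_norm, Complex.normSq_apply]
      simp only [Complex.add_re, Complex.add_im, Complex.mul_re, Complex.mul_im,
        Complex.ofReal_re, Complex.ofReal_im, Complex.exp_ofReal_mul_I_re,
        Complex.exp_ofReal_mul_I_im]
      ring
    have hb1 : ‖B 0 1‖ ^ 2 = 1 - ‖B 0 0‖ ^ 2 := by linarith
    rw [habs, hθd, Real.cos_sub, hb1]
    linear_combination (‖B 0 0‖ ^ 2) ^ 2 * hpy1 + (1 - ‖B 0 0‖ ^ 2) ^ 2 * hpy2
  · -- (0,1) entry
    have hM01 : (Uprod 2 U 0 n) 0 1 =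
        (B 0 0 * (starRingEnd ℂ) (B 1 0)) *
          (Complex.exp ((θ₁ : ℂ) * Complex.I) - Complex.exp ((θ₂ : ℂ) * Complex.I)) := by
      rw [hentry 1]
      linear_combination Complex.exp ((θ₂ : ℂ) * Complex.I) * horth
    have hb10 : ‖B 1 0‖ ^ 2 = ‖B 0 1‖ ^ 2 := by linarith
    have hdiff : ‖Complex.exp ((θ₁ : ℂ) * Complex.I) - Complex.exp ((θ₂ : ℂ) * Complex.I)‖ ^ 2 =
        (Real.cos θ₁ - Real.cos θ₂) ^ 2 + (Real.sin θ₁ - Real.sin θ₂) ^ 2 := by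
      rw [Complex.sq_norm, Complex.normSq_apply]
      simp only [Complex.sub_re, Complex.sub_im, Complex.exp_ofReal_mul_I_re,
        Complex.exp_ofReal_mul_I_im]
      ring
    rw [hM01, norm_mul, norm_mul, mul_pow, mul_pow, hdiff]
    have hconj : ‖(starRingEnd ℂ) (B 1 0)‖ = ‖B 1 0‖ := RCLike.norm_conj _
    rw [hconj, hb10, hθd, Real.cos_sub]
    linear_combination (‖B 0 0‖ ^ 2 * ‖B 0 1‖ ^ 2) * hpy1 + (‖B 0 0‖ ^ 2 * ‖B 0 1‖ ^ 2) * hpy2
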